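/- Let n ≥ k ≥ 2 and r ≥ 3, let t = ⌈(r-2)k/(r-1)⌉, and let λ ∈ [r-1] be the unique integer with k + λ ≡ 0 (mod r-1). Let F ⊆ binom([n],k) be an r-focal-free k-uniform hypergraph, and let F₀ = {A ∈ F : every (t-1)-subset of A is contained in some member of F other than A}. Then every A ∈ F₀ has at least binom(k,t) − m(k, k−t, λ) own t-subsets, i.e., t-subsets of A not contained in any other member of F. Here m(k, s, λ) denotes the maximum number of edges in an s-uniform hypergraph on k vertices with no λ pairwise disjoint edges. -/
import Mathlib


open Finset

/-- A family of finsets is `r`-focal-free if it contains no `r` distinct sets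
`A 0, A 1, ..., A (r-1)` such that every element of the focus `A 0` belongs to
at least `r - 2` of the other sets. -/
def IsFocalFree (r : ℕ) {α : Type*} [DecidableEq α] (F : Finset (Finset α)) : Prop :=
  ¬ ∃ (A₀ : Finset α) (A : Fin (r - 1) → Finset α), A₀ ∈ F ∧ (∀ i, A i ∈ F) ∧
      Function.Injective A ∧ (∀ i, A i ≠ A₀) ∧
      ∀ x ∈ A₀, r - 2 ≤ (Finset.univ.filter fun i : Fin (r - 1) => x ∈ A i).card

/-- `matchNum n s lam` is the maximum number of edges of an `s`-uniform hypergraph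
on `n` vertices containing no `lam` pairwise disjoint edges. -/
noncomputable def matchNum (n s lam : ℕ) : ℕ :=
  sSup {c | ∃ G : Finset (Finset (Fin n)), (∀ e ∈ G, e.card = s) ∧
    (¬ ∃ M : Finset (Finset (Fin n)), M ⊆ G ∧ M.card = lam ∧
      (M : Set (Finset (Fin n))).Pairwise Disjoint) ∧ G.card = c}

lemma exists_partition {α : Type*} [DecidableEq α] (R : Finset α) (m u : ℕ) (hu : 0 < u)
    (h : R.card = m * u) :
    ∃ P : Fin m → Finset α, (∀ j, P j ⊆ R) ∧ (∀ j, (P j).card = u) ∧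
      (∀ i j, i ≠ j → Disjoint (P i) (P j)) ∧ ∀ x ∈ R, ∃ j, x ∈ P j := by
  let E : R ≃ Fin (m * u) := R.equivFin.trans (finCongr h)
  have hbd : ∀ (j : Fin m) (i : Fin u), j.val * u + i.val < m * u := by
    intro j i
    have h1 : j.val * u + i.val < (j.val + 1) * u := by rw [add_mul, one_mul]; omega
    exact lt_of_lt_of_le h1 (Nat.mul_le_mul_right u j.isLt)
  have key : ∀ (j : Fin m) (i : Fin u), (j.val * u + i.val) / u = j.val := by
    intro j i
    rw [mul_comm, Nat.mul_add_div hu, Nat.div_eq_of_lt i.isLt, add_zero]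
  refine ⟨fun j => (univ : Finset (Fin u)).image
      (fun i => ((E.symm ⟨j.val * u + i.val, hbd j i⟩ : R) : α)), ?_, ?_, ?_, ?_⟩
  · intro j x hx
    simp only [mem_image] at hx
    obtain ⟨i, _, rfl⟩ := hx
    exact (E.symm _).2
  · intro j
    rw [Finset.card_image_of_injective _ ?_, card_univ, Fintype.card_fin]
    intro i i' hii
    have h2 := E.symm.injective (Subtype.coe_injective hii)
    simp only [Fin.mk.injEq] at h2
    exact Fin.ext (by omega)
  · intro i j hij
    rw [Finset.disjoint_left]
    intro x hxi hxj
    simp only [mem_image] at hxi hxj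
    obtain ⟨a, _, ha⟩ := hxi
    obtain ⟨b, _, hb⟩ := hxj
    have h2 : (⟨i.val * u + a.val, hbd i a⟩ : Fin (m*u)) = ⟨j.val * u + b.val, hbd j b⟩ :=
      E.symm.injective (Subtype.coe_injective (ha.trans hb.symm))
    simp only [Fin.mk.injEq] at h2
    have e1 := key i a
    have e2 := key j b
    rw [h2, e2] at e1
    exact hij (Fin.ext e1.symm)
  · intro x hx
    set p := E ⟨x, hx⟩ with hp
    have hpu : p.val / u < m := (Nat.div_lt_iff_lt_mul hu).2 p.isLt
    have hmod : p.val % u < u := Nat.mod_lt _ hu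
    have hdm : p.val / u * u + p.val % u = p.val := by
      have := Nat.div_add_mod p.val u
      have h2 : p.val / u * u = u * (p.val / u) := mul_comm _ _
      omega
    refine ⟨⟨p.val / u, hpu⟩, ?_⟩
    simp only [mem_image, mem_univ]
    refine ⟨⟨p.val % u, hmod⟩, by simp, ?_⟩
    have h3 : (⟨p.val / u * u + p.val % u, by rw [hdm]; exact p.isLt⟩ : Fin (m*u)) = p := Fin.ext hdm
    rw [h3, hp, Equiv.symm_apply_apply]

lemma focal_arith (k r lam : ℕ) (hk : 2 ≤ k) (hr : 3 ≤ r) (hlam1 : 1 ≤ lam)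
    (hlam2 : lam ≤ r - 1) (hlam : (k + lam) % (r - 1) = 0) :
    ((r - 2) * k + r - 2) / (r - 1) = k - k / (r - 1) ∧ k / (r - 1) < k ∧
      k - lam * (k / (r - 1)) = (r - 1 - lam) * (k / (r - 1) + 1) := by
  set r' := r - 1 with hr'
  have hr2 : 2 ≤ r' := by omega
  set q := k / r' with hq
  set s := k % r' with hs
  have hks : k = r' * q + s := (Nat.div_add_mod k r').symm
  have hslt : s < r' := Nat.mod_lt k (by omega)
  have hdvd : r' ∣ (s + lam) := by
    have h1 : r' ∣ k + lam := Nat.dvd_of_mod_eq_zero hlam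
    have h2 : k + lam = r' * q + (s + lam) := by omega
    have h3 : r' ∣ r' * q := Dvd.intro q rfl
    exact (Nat.dvd_add_right h3).mp (h2 ▸ h1)
  obtain ⟨c, hc⟩ := hdvd
  have hc1 : c = 1 := by
    rcases c with _ | c
    · omega
    · rcases c with _ | c
      · rfl
      · exfalso
        have h7 : r' * 2 ≤ r' * (c + 1 + 1) := Nat.mul_le_mul_left _ (by omega)
        omega
  rw [hc1, mul_one] at hc
  have hsl : s + lam = r' := hc
  obtain ⟨d, hd⟩ : ∃ d, r' = s + d + 1 := ⟨r' - s - 1, by omega⟩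
  have hk2 : k = (s + d + 1) * q + s := by rw [← hd]; exact hks
  have key : (s + d) * (k + 1) = r' * ((s + d) * q + s) + d := by
    rw [hd, hk2]; ring
  have h5 : (r - 2) * k + r - 2 = (s + d) * (k + 1) := by
    have e1 : r - 2 = s + d := by omega
    have e2 : (s + d) * (k + 1) = (s + d) * k + (s + d) := by ring
    rw [e1, e2]
    omega
  have hdiv : ((r - 2) * k + r - 2) / r' = (s + d) * q + s := by
    rw [h5, key, Nat.mul_add_div (by omega), Nat.div_eq_of_lt (by omega), add_zero]
  refine ⟨?_, ?_, ?_⟩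
  · rw [hdiv]
    have e3 : (s + d + 1) * q = (s + d) * q + q := by ring
    omega
  · exact Nat.div_lt_self (by omega) (by omega)
  · have e4 : r - 1 - lam = s := by omega
    rw [e4]
    have e5 : s * (q + 1) = s * q + s := by ring
    have e6 : r' * q = s * q + lam * q := by rw [← hsl]; ring
    omega

lemma card_le_matchNum {n k s lam : ℕ} (A : Finset (Fin n)) (hAk : A.card = k)
    (G : Finset (Finset (Fin n))) (hsub : ∀ C ∈ G, C ⊆ A) (hcard : ∀ C ∈ G, C.card = s)
    (hmatch : ¬ ∃ M : Finset (Finset (Fin n)), M ⊆ G ∧ M.card = lam ∧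
      (M : Set (Finset (Fin n))).Pairwise Disjoint) :
    G.card ≤ matchNum k s lam := by
  classical
  let φ : A ≃ Fin k := A.equivFin.trans (finCongr hAk)
  let lift : Finset (Fin n) → Finset (Fin k) :=
    fun C => (univ : Finset (Fin k)).filter (fun y => (φ.symm y : Fin n) ∈ C)
  -- membership characterization
  have hmem2 : ∀ (C : Finset (Fin n)) (y : Fin k), (y ∈ lift C ↔ (φ.symm y : Fin n) ∈ C) := by
    intro C y
    simp only [lift, mem_filter, mem_univ, true_and]
  have hmem : ∀ (C : Finset (Fin n)) (x : Fin n) (hx : x ∈ A), (φ ⟨x, hx⟩ ∈ lift C ↔ x ∈ C) := by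
    intro C x hx
    rw [hmem2, Equiv.symm_apply_apply]
  -- card preservation
  have hliftcard : ∀ C, C ⊆ A → (lift C).card = C.card := by
    intro C hCA
    apply Finset.card_nbij (fun y => (φ.symm y : Fin n))
    · intro y hy
      exact (hmem2 C y).1 hy
    · intro y _ y' _ h
      exact φ.symm.injective (Subtype.coe_injective h)
    · intro x hx
      refine ⟨φ ⟨x, hCA hx⟩, ?_, by simp⟩
      exact Finset.mem_coe.2 ((hmem C x (hCA hx)).2 hx)
  have hinj : Set.InjOn lift G := by
    intro C₁ h₁ C₂ h₂ hl
    ext x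
    constructor
    · intro hx
      have hxA := hsub _ h₁ hx
      have := (hmem C₁ x hxA).2 hx
      rw [hl] at this
      exact (hmem C₂ x hxA).1 this
    · intro hx
      have hxA := hsub _ h₂ hx
      have := (hmem C₂ x hxA).2 hx
      rw [← hl] at this
      exact (hmem C₁ x hxA).1 this
  have hGc : (G.image lift).card = G.card := Finset.card_image_of_injOn hinj
  have hset : G.card ∈ {c | ∃ G' : Finset (Finset (Fin k)), (∀ e ∈ G', e.card = s) ∧
      (¬ ∃ M : Finset (Finset (Fin k)), M ⊆ G' ∧ M.card = lam ∧
        (M : Set (Finset (Fin k))).Pairwise Disjoint) ∧ G'.card = c} := by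
    refine ⟨G.image lift, ?_, ?_, hGc⟩
    · intro e he
      simp only [mem_image] at he
      obtain ⟨C, hC, rfl⟩ := he
      rw [hliftcard C (hsub C hC)]
      exact hcard C hC
    · rintro ⟨M', hM'sub, hM'card, hM'disj⟩
      apply hmatch
      refine ⟨G.filter (fun C => lift C ∈ M'), Finset.filter_subset _ _, ?_, ?_⟩
      · have himg : (G.filter (fun C => lift C ∈ M')).image lift = M' := by
          apply Finset.Subset.antisymm
          · intro e he
            simp only [mem_image, mem_filter] at he
            obtain ⟨C, ⟨_, hC2⟩, rfl⟩ := he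
            exact hC2
          · intro e he
            have := hM'sub he
            simp only [mem_image] at this ⊢
            obtain ⟨C, hC, rfl⟩ := this
            exact ⟨C, Finset.mem_filter.2 ⟨hC, he⟩, rfl⟩
        have := Finset.card_image_of_injOn
          (hinj.mono (Finset.coe_subset.2 (Finset.filter_subset (fun C => lift C ∈ M') G)))
        rw [himg] at this
        omega
      · intro C₁ h₁ C₂ h₂ hne
        simp only [Finset.mem_coe, mem_filter] at h₁ h₂
        have hld : Disjoint (lift C₁) (lift C₂) := by
          apply hM'disj h₁.2 h₂.2
          intro h
          exact hne (hinj h₁.1 h₂.1 h)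
        rw [Finset.disjoint_left] at hld ⊢
        intro x hx₁ hx₂
        have hxA := hsub _ h₁.1 hx₁
        exact hld ((hmem C₁ x hxA).2 hx₁) ((hmem C₂ x hxA).2 hx₂)
  have hbdd : BddAbove {c | ∃ G' : Finset (Finset (Fin k)), (∀ e ∈ G', e.card = s) ∧
      (¬ ∃ M : Finset (Finset (Fin k)), M ⊆ G' ∧ M.card = lam ∧
        (M : Set (Finset (Fin k))).Pairwise Disjoint) ∧ G'.card = c} := by
    refine ⟨Fintype.card (Finset (Fin k)), ?_⟩
    rintro c ⟨G', _, _, rfl⟩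
    exact Finset.card_le_univ G'
  exact le_csSup hbdd hset


set_option maxHeartbeats 1000000 in
/-- Every member of an r-focal-free k-uniform family with no own (t-1)-subsets
has many own t-subsets. -/
theorem many_own_t_subsets {n k r t lam : ℕ} (hn : k ≤ n) (hk : 2 ≤ k) (hr : 3 ≤ r)
    (ht : t = ((r - 2) * k + r - 2) / (r - 1))
    (hlam1 : 1 ≤ lam) (hlam2 : lam ≤ r - 1) (hlam : (k + lam) % (r - 1) = 0)
    (F : Finset (Finset (Fin n))) (hunif : ∀ A ∈ F, A.card = k)
    (hfree : IsFocalFree r F)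
    (A : Finset (Fin n)) (hA : A ∈ F)
    (hno : ∀ T ∈ A.powersetCard (t - 1), ∃ B ∈ F, B ≠ A ∧ T ⊆ B) :
    k.choose t - matchNum k (k - t) lam ≤
      ((A.powersetCard t).filter fun T => ∀ B ∈ F, B ≠ A → ¬ T ⊆ B).card := by
  classical
  have hAk : A.card = k := hunif A hA
  obtain ⟨hdiv, hqk, hb⟩ := focal_arith k r lam hk hr hlam1 hlam2 hlam
  obtain ⟨q, hqdef⟩ : ∃ q, k / (r - 1) = q := ⟨_, rfl⟩
  rw [hqdef] at hdiv hqk hb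
  have htq : t = k - q := by rw [ht]; exact hdiv
  have hkt : k - t = q := by omega
  have ht1 : 1 ≤ t := by omega
  set nonown := (A.powersetCard t).filter (fun T => ∃ B ∈ F, B ≠ A ∧ T ⊆ B) with hnodef
  set G := nonown.image (fun T => A \ T) with hGdef
  have hnonsub : ∀ T ∈ nonown, T ⊆ A ∧ T.card = t := by
    intro T hT
    have := (mem_filter.1 hT).1
    rwa [mem_powersetCard] at this
  have hGprop : ∀ C ∈ G, C ⊆ A ∧ C.card = k - t ∧ ∃ B ∈ F, B ≠ A ∧ A \ C ⊆ B := by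
    intro C hC
    rw [hGdef, mem_image] at hC
    obtain ⟨T, hT, rfl⟩ := hC
    obtain ⟨hTA, hTc⟩ := hnonsub T hT
    have hsd : A \ (A \ T) = T := Finset.sdiff_sdiff_eq_self hTA
    obtain ⟨B, hBF, hBne, hTB⟩ := (mem_filter.1 hT).2
    refine ⟨sdiff_subset, ?_, B, hBF, hBne, ?_⟩
    · rw [card_sdiff_of_subset hTA, hAk, hTc]
    · rw [hsd]; exact hTB
  have hGcard : G.card = nonown.card := by
    apply card_image_of_injOn
    intro T hT T' hT' h
    have h1 := (hnonsub T (mem_coe.1 hT)).1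
    have h2 := (hnonsub T' (mem_coe.1 hT')).1
    calc T = A \ (A \ T) := (Finset.sdiff_sdiff_eq_self h1).symm
    _ = A \ (A \ T') := by rw [show A \ T = A \ T' from h]
    _ = T' := Finset.sdiff_sdiff_eq_self h2
  -- the crucial claim: no lam pairwise disjoint members in G
  have hNoM : ¬ ∃ M : Finset (Finset (Fin n)), M ⊆ G ∧ M.card = lam ∧
      (M : Set (Finset (Fin n))).Pairwise Disjoint := by
    rintro ⟨M, hMG, hMc, hMd⟩
    set EM := (M.equivFin.trans (finCongr hMc)).symm with hEM
    set C : Fin lam → Finset (Fin n) := fun i => ((EM i : M) : Finset (Fin n)) with hCdef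
    have hCM : ∀ i, C i ∈ M := fun i => (EM i).2
    have hCinj : Function.Injective C := fun i j h => EM.injective (Subtype.ext h)
    have hCdisj : ∀ i j, i ≠ j → Disjoint (C i) (C j) := fun i j hij =>
      hMd (mem_coe.2 (hCM i)) (mem_coe.2 (hCM j)) (fun h => hij (hCinj h))
    have hCp := fun i => hGprop (C i) (hMG (hCM i))
    have hCA : ∀ i, C i ⊆ A := fun i => (hCp i).1
    have hCc : ∀ i, (C i).card = q := fun i => by rw [(hCp i).2.1, hkt]
    have hex : ∀ i, ∃ Bi, Bi ∈ F ∧ Bi ≠ A ∧ A \ C i ⊆ Bi := by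
      intro i
      obtain ⟨_, _, B0, h1, h2, h3⟩ := hCp i
      exact ⟨B0, h1, h2, h3⟩
    choose B hBF hBne hBsub using hex
    set U := Finset.univ.biUnion C with hU
    have hUA : U ⊆ A := by
      intro x hx
      rw [hU, mem_biUnion] at hx
      obtain ⟨i, _, hx⟩ := hx
      exact hCA i hx
    have hUcard : U.card = lam * q := by
      rw [hU, Finset.card_biUnion (fun i _ j _ hij => hCdisj i j hij)]
      rw [Finset.sum_congr rfl (fun i _ => hCc i), Finset.sum_const, card_univ,
        Fintype.card_fin, smul_eq_mul]
    set R := A \ U with hR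
    have hRcard : R.card = (r - 1 - lam) * (q + 1) := by
      rw [hR, card_sdiff_of_subset hUA, hAk, hUcard]; exact hb
    obtain ⟨P, hPR, hPc, hPd, hPcov⟩ := exists_partition R (r - 1 - lam) (q + 1)
      (by omega) hRcard
    have hPA : ∀ j, P j ⊆ A := fun j => (hPR j).trans sdiff_subset
    have hexP : ∀ j, ∃ Bj, Bj ∈ F ∧ Bj ≠ A ∧ A \ P j ⊆ Bj := by
      intro j
      have hmem : A \ P j ∈ A.powersetCard (t - 1) := by
        rw [mem_powersetCard]
        refine ⟨sdiff_subset, ?_⟩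
        rw [card_sdiff_of_subset (hPA j), hAk, hPc j]
        omega
      obtain ⟨B', h1, h2, h3⟩ := hno _ hmem
      exact ⟨B', h1, h2, h3⟩
    choose B' hB'F hB'ne hB'sub using hexP
    have hRC : ∀ (i) (x), x ∈ R → x ∉ C i := by
      intro i x hx hc
      rw [hR, mem_sdiff] at hx
      exact hx.2 (mem_biUnion.2 ⟨i, mem_univ i, hc⟩)
    have hnotsup : ∀ D, D ∈ F → D ≠ A → ¬ A ⊆ D := by
      intro D hD hne hsub
      exact hne (Finset.eq_of_subset_of_card_le hsub (by rw [hAk, hunif D hD])).symm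
    -- pairwise distinctness of chosen witnesses
    have hBB : ∀ i j, i ≠ j → B i ≠ B j := by
      intro i j hij heq
      apply hnotsup (B i) (hBF i) (hBne i)
      intro x hx
      by_cases hxc : x ∈ C i
      · have hxj : x ∉ C j := Finset.disjoint_left.1 (hCdisj i j hij) hxc
        rw [heq]
        exact hBsub j (mem_sdiff.2 ⟨hx, hxj⟩)
      · exact hBsub i (mem_sdiff.2 ⟨hx, hxc⟩)
    have hB'B' : ∀ i j, i ≠ j → B' i ≠ B' j := by
      intro i j hij heq
      apply hnotsup (B' i) (hB'F i) (hB'ne i)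
      intro x hx
      by_cases hxc : x ∈ P i
      · have hxj : x ∉ P j := Finset.disjoint_left.1 (hPd i j hij) hxc
        rw [heq]
        exact hB'sub j (mem_sdiff.2 ⟨hx, hxj⟩)
      · exact hB'sub i (mem_sdiff.2 ⟨hx, hxc⟩)
    have hBB' : ∀ i j, B i ≠ B' j := by
      intro i j heq
      apply hnotsup (B i) (hBF i) (hBne i)
      intro x hx
      by_cases hxc : x ∈ C i
      · have hxR : x ∉ R := fun h => hRC i x h hxc
        have hxP : x ∉ P j := fun h => hxR (hPR j h)
        rw [heq]
        exact hB'sub j (mem_sdiff.2 ⟨hx, hxP⟩)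
      · exact hBsub i (mem_sdiff.2 ⟨hx, hxc⟩)
    -- assemble the focal configuration
    set Af : Fin (r - 1) → Finset (Fin n) := fun i =>
      if h : (i : ℕ) < lam then B ⟨i, h⟩
      else B' ⟨(i : ℕ) - lam, by have := i.isLt; omega⟩ with hAf
    apply hfree
    refine ⟨A, Af, hA, ?_, ?_, ?_, ?_⟩
    · intro i
      simp only [hAf]
      split
      · exact hBF _
      · exact hB'F _
    · intro i j hij
      simp only [hAf] at hij
      by_cases hi : (i : ℕ) < lam
      · by_cases hj : (j : ℕ) < lam
        · rw [dif_pos hi, dif_pos hj] at hij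
          have h2 : (⟨(i : ℕ), hi⟩ : Fin lam) = ⟨(j : ℕ), hj⟩ := by
            by_contra hc
            exact hBB _ _ hc hij
          rw [Fin.mk.injEq] at h2
          exact Fin.ext h2
        · rw [dif_pos hi, dif_neg hj] at hij
          exact absurd hij (hBB' _ _)
      · by_cases hj : (j : ℕ) < lam
        · rw [dif_neg hi, dif_pos hj] at hij
          exact absurd hij.symm (hBB' _ _)
        · rw [dif_neg hi, dif_neg hj] at hij
          have h2 : (⟨(i : ℕ) - lam, by have := i.isLt; omega⟩ : Fin (r - 1 - lam)) =
              ⟨(j : ℕ) - lam, by have := j.isLt; omega⟩ := by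
            by_contra hc
            exact hB'B' _ _ hc hij
          rw [Fin.mk.injEq] at h2
          exact Fin.ext (by omega)
    · intro i
      simp only [hAf]
      split
      · exact hBne _
      · exact hB'ne _
    · intro x hx
      have hfail : ∀ i : Fin (r - 1), x ∉ Af i →
          (∃ a : Fin lam, (i : ℕ) = (a : ℕ) ∧ x ∈ C a) ∨
          (∃ b : Fin (r - 1 - lam), (i : ℕ) = (b : ℕ) + lam ∧ x ∈ P b) := by
        intro i hxi
        simp only [hAf] at hxi
        by_cases h : (i : ℕ) < lam
        · rw [dif_pos h] at hxi
          left
          refine ⟨⟨(i : ℕ), h⟩, rfl, ?_⟩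
          by_contra hc
          exact hxi (hBsub _ (mem_sdiff.2 ⟨hx, hc⟩))
        · rw [dif_neg h] at hxi
          right
          refine ⟨⟨(i : ℕ) - lam, by have := i.isLt; omega⟩, by simp; omega, ?_⟩
          by_contra hc
          exact hxi (hB'sub _ (mem_sdiff.2 ⟨hx, hc⟩))
      have hone : (univ.filter (fun i : Fin (r - 1) => ¬ x ∈ Af i)).card ≤ 1 := by
        rw [Finset.card_le_one]
        intro i hi j hj
        rw [mem_filter] at hi hj
        rcases hfail i hi.2 with ⟨a, ha1, ha2⟩ | ⟨b, hb1, hb2⟩ <;>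
          rcases hfail j hj.2 with ⟨a', ha1', ha2'⟩ | ⟨b', hb1', hb2'⟩
        · have : a = a' := by
            by_contra hc
            exact Finset.disjoint_left.1 (hCdisj a a' hc) ha2 ha2'
          exact Fin.ext (by rw [ha1, ha1', this])
        · exact absurd ha2 (hRC a x (hPR b' hb2'))
        · exact absurd ha2' (hRC a' x (hPR b hb2))
        · have : b = b' := by
            by_contra hc
            exact Finset.disjoint_left.1 (hPd b b' hc) hb2 hb2'
          exact Fin.ext (by rw [hb1, hb1', this])
      have htot := Finset.card_filter_add_card_filter_not
        (s := (univ : Finset (Fin (r - 1)))) (p := fun i => x ∈ Af i)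
      rw [card_univ, Fintype.card_fin] at htot
      omega
  -- conclude
  have hle : nonown.card ≤ matchNum k (k - t) lam := by
    rw [← hGcard]
    exact card_le_matchNum A hAk G (fun C hC => (hGprop C hC).1)
      (fun C hC => (hGprop C hC).2.1) hNoM
  have hiff : ∀ T : Finset (Fin n), (∃ B ∈ F, B ≠ A ∧ T ⊆ B) ↔
      ¬ ∀ B ∈ F, B ≠ A → ¬ T ⊆ B := by
    intro T
    push_neg
    rfl
  have hsplit : ((A.powersetCard t).filter fun T => ∀ B ∈ F, B ≠ A → ¬ T ⊆ B).card
      + nonown.card = k.choose t := by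
    rw [hnodef]
    have hcongr : (A.powersetCard t).filter (fun T => ∃ B ∈ F, B ≠ A ∧ T ⊆ B) =
        (A.powersetCard t).filter (fun T => ¬ ∀ B ∈ F, B ≠ A → ¬ T ⊆ B) := by
      apply filter_congr
      intro T _
      exact iff_iff_eq.1 (hiff T) ▸ Iff.rfl
    rw [hcongr, Finset.card_filter_add_card_filter_not, card_powersetCard, hAk]
  omega
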